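/- Suppose ψ : (0,∞) → (0,∞) is twice differentiable with ψ'(ξ) > 0 for all ξ > 0, and for some β > 0 and all ξ > 0 one has -ξψ''(ξ)/ψ'(ξ) ≥ 1 - β/2. Then for all ξ > 0, ξψ'(ξ)/(ψ(ξ) - ψ(0⁺)) ≤ β/2. -/

import Mathlib

open Filter Set

theorem scaling_upper_ratio (ψ ψ' ψ'' : ℝ → ℝ) (β ψ0 : ℝ) (hβ : 0 < β)
    (hd1 : ∀ ξ ∈ Set.Ioi (0:ℝ), HasDerivAt ψ (ψ' ξ) ξ)
    (hd2 : ∀ ξ ∈ Set.Ioi (0:ℝ), HasDerivAt ψ' (ψ'' ξ) ξ)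
    (hpos : ∀ ξ ∈ Set.Ioi (0:ℝ), 0 < ψ ξ)
    (hd1pos : ∀ ξ ∈ Set.Ioi (0:ℝ), 0 < ψ' ξ)
    (hscal : ∀ ξ ∈ Set.Ioi (0:ℝ), 1 - β / 2 ≤ -ξ * ψ'' ξ / ψ' ξ)
    (hlim : Tendsto ψ (nhdsWithin 0 (Set.Ioi 0)) (nhds ψ0)) :
    ∀ ξ ∈ Set.Ioi (0:ℝ), ξ * ψ' ξ / (ψ ξ - ψ0) ≤ β / 2 := by
  intro ξ hξ
  have hξ0 : (0:ℝ) < ξ := hξ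
  have hcontψ : ContinuousOn ψ (Ioi 0) := fun x hx =>
    (hd1 x hx).continuousAt.continuousWithinAt
  have hψmono : StrictMonoOn ψ (Ioi 0) := by
    apply strictMonoOn_of_deriv_pos (convex_Ioi 0) hcontψ
    intro x hx
    rw [interior_Ioi] at hx
    rw [(hd1 x hx).deriv]
    exact hd1pos x hx
  have hψ0le : ∀ s ∈ Ioi (0:ℝ), ψ0 ≤ ψ s := by
    intro s hs
    refine le_of_tendsto hlim ?_
    have hmem : Ioo (0:ℝ) s ∈ nhdsWithin 0 (Ioi 0) :=
      Ioo_mem_nhdsGT_of_mem ⟨le_refl 0, hs⟩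
    filter_upwards [hmem] with t ht
    exact (hψmono ht.1 hs ht.2).le
  have hgap : 0 < ψ ξ - ψ0 := by
    have h1 : ψ0 ≤ ψ (ξ/2) := hψ0le _ (half_pos hξ0)
    have h2 : ψ (ξ/2) < ψ ξ := hψmono (half_pos hξ0) hξ (half_lt_self hξ0)
    linarith
  have key : ξ * ψ' ξ ≤ β/2 * (ψ ξ - ψ0) := by
    by_contra hcon
    push_neg at hcon
    set δ := ξ * ψ' ξ - β/2 * (ψ ξ - ψ0) with hδ
    have hδpos : 0 < δ := by simp only [hδ]; linarith
    have hFd : ∀ x ∈ Ioi (0:ℝ),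
        HasDerivAt (fun s => s * ψ' s - β/2 * ψ s) (1 * ψ' x + x * ψ'' x - β/2 * ψ' x) x :=
      fun x hx => (((hasDerivAt_id x).mul (hd2 x hx)).sub ((hd1 x hx).const_mul (β/2)))
    have hF : AntitoneOn (fun s => s * ψ' s - β/2 * ψ s) (Ioi 0) := by
      apply antitoneOn_of_deriv_nonpos (convex_Ioi 0)
      · exact fun x hx => (hFd x hx).continuousAt.continuousWithinAt
      · rw [interior_Ioi]; exact fun x hx => (hFd x hx).differentiableAt.differentiableWithinAt
      · rw [interior_Ioi]
        intro x hx
        rw [(hFd x hx).deriv]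
        have hs := hscal x hx
        have hp := hd1pos x hx
        have h2 := (le_div_iff₀ hp).mp hs
        nlinarith
    have hlow : ∀ x ∈ Ioo (0:ℝ) ξ, δ ≤ x * ψ' x := by
      intro x hx
      have hFle := hF (show x ∈ Ioi (0:ℝ) from hx.1) hξ hx.2.le
      have h0 := hψ0le x hx.1
      have hb : β/2 * ψ0 ≤ β/2 * ψ x :=
        mul_le_mul_of_nonneg_left h0 (by linarith : (0:ℝ) ≤ β/2)
      rw [hδ]
      linarith
    have hG : MonotoneOn (fun s => ψ s - δ * Real.log s) (Ioc 0 ξ) := by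
      apply monotoneOn_of_deriv_nonneg (convex_Ioc 0 ξ)
      · intro x hx
        exact ((hd1 x hx.1).continuousAt.sub
          (continuousAt_const.mul (Real.continuousAt_log hx.1.ne'))).continuousWithinAt
      · rw [interior_Ioc]
        intro x hx
        exact ((hd1 x hx.1).sub ((Real.hasDerivAt_log hx.1.ne').const_mul δ)).differentiableAt.differentiableWithinAt
      · rw [interior_Ioc]
        intro x hx
        have hD : HasDerivAt (fun s => ψ s - δ * Real.log s) (ψ' x - δ * x⁻¹) x :=
          (hd1 x hx.1).sub ((Real.hasDerivAt_log hx.1.ne').const_mul δ)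
        rw [hD.deriv]
        have hl := hlow x hx
        have hx0 : (0:ℝ) < x := hx.1
        rw [sub_nonneg]
        rw [mul_inv_le_iff₀ hx0]
        linarith [hl, mul_comm x (ψ' x)]
    set C := ψ ξ - δ * Real.log ξ with hC
    set s := min ξ (Real.exp ((-C)/δ - 1)) with hs
    have hs0 : 0 < s := lt_min hξ0 (Real.exp_pos _)
    have hsξ : s ≤ ξ := min_le_left _ _
    have hGle := hG (show s ∈ Ioc (0:ℝ) ξ from ⟨hs0, hsξ⟩)
      (show ξ ∈ Ioc (0:ℝ) ξ from ⟨hξ0, le_refl ξ⟩) hsξ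
    simp only at hGle
    have hlog : Real.log s ≤ (-C)/δ - 1 := by
      calc Real.log s ≤ Real.log (Real.exp ((-C)/δ - 1)) :=
            Real.log_le_log hs0 (min_le_right _ _)
        _ = (-C)/δ - 1 := Real.log_exp _
    have hmul : δ * ((-C)/δ - 1) = -C - δ := by field_simp
    have hψs : ψ s ≤ -δ := by
      have h1 : ψ s ≤ ψ ξ - δ * Real.log ξ + δ * Real.log s := by linarith
      have h2 : δ * Real.log s ≤ δ * ((-C)/δ - 1) :=
        mul_le_mul_of_nonneg_left hlog hδpos.le
      rw [hmul] at h2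
      rw [hC] at h2
      linarith
    linarith [hpos s hs0]
  rw [div_le_iff₀ hgap]
  linarith
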